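/- Let S and S' be finite multisets of examples in ℝ^d × {0,1} with edit distance Δ(S,S') ≤ 1. Then for every feature j and threshold t, the Gini gains satisfy |G(S,j,t) − G(S',j,t)| ≤ 12 / max(|S|, |S'|). -/

import Mathlib

open Classical in
/-- The Gini index of a multiset of binary-labeled examples:
`2 p (1-p)` where `p` is the fraction of `true` labels; `0` for the empty multiset. -/
noncomputable def gini {α : Type*} (S : Multiset (α × Bool)) : ℝ :=
  if S = 0 then 0 else
    let p : ℝ := ((S.filter fun e => e.2 = true).card : ℝ) / S.card
    2 * p * (1 - p)

open Classical in
/-- The Gini gain of the split (j, t) on the multiset S of examples in ℝ^d × {0,1}: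
G(S,j,t) = g(S) − (|S₋|/|S|) g(S₋) − (|S₊|/|S|) g(S₊) where S₋ = S[x_j ≤ t] and
S₊ = S[x_j > t]; by convention G(∅,j,t) = 0. -/
noncomputable def giniGain {d : ℕ} (S : Multiset ((Fin d → ℝ) × Bool)) (j : Fin d) (t : ℝ) : ℝ :=
  if S = 0 then 0 else
    gini S
      - (((S.filter fun e : (Fin d → ℝ) × Bool => e.1 j ≤ t).card : ℝ) / S.card) * gini (S.filter fun e : (Fin d → ℝ) × Bool => e.1 j ≤ t)
      - (((S.filter fun e : (Fin d → ℝ) × Bool => t < e.1 j).card : ℝ) / S.card) * gini (S.filter fun e : (Fin d → ℝ) × Bool => t < e.1 j)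

/-- `EditPath n S S'` holds iff `S'` can be obtained from `S` by a sequence of `n`
single-element insertions and deletions. -/
def EditPath {α : Type*} : ℕ → Multiset α → Multiset α → Prop
  | 0, S, S' => S = S'
  | n + 1, S, S' => ∃ T : Multiset α, ((∃ a, T = a ::ₘ S) ∨ (∃ a, S = a ::ₘ T)) ∧ EditPath n T S'

/-- The edit distance between two multisets: the minimum number of single-element
insertions and deletions transforming one into the other. -/
noncomputable def editDist {α : Type*} (S S' : Multiset α) : ℕ :=
  sInf {n | EditPath n S S'}

noncomputable def F (n m k : ℕ) : ℝ := 2 * k * ((m : ℝ) - k) / (n * m)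

noncomputable def G0 (m k : ℕ) : ℝ := 2 * k * ((m : ℝ) - k) / m

lemma F_eq (n m k : ℕ) : F n m k = G0 m k / n := by
  unfold F G0; ring

lemma G0_nonneg {m k : ℕ} (h : k ≤ m) : 0 ≤ G0 m k := by
  have : (k:ℝ) ≤ m := by exact_mod_cast h
  unfold G0
  have : (0:ℝ) ≤ (m:ℝ) - k := by linarith
  positivity

lemma G0_le {m k : ℕ} (h : k ≤ m) : G0 m k ≤ (m:ℝ) / 2 := by
  rcases Nat.eq_zero_or_pos m with rfl | hm
  · interval_cases k; simp [G0]
  · have hb : (0:ℝ) < m := by exact_mod_cast hm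
    rw [G0, div_le_div_iff₀ hb (by norm_num)]
    have hk : (k:ℝ) ≤ m := by exact_mod_cast h
    nlinarith [sq_nonneg ((m:ℝ) - 2*k)]

lemma step1 {n m k : ℕ} (hkm : k ≤ m) (hmn : m ≤ n) :
    |G0 m k / n - G0 m k / (n+1)| ≤ 1 / ((n:ℝ) + 1) := by
  rcases Nat.eq_zero_or_pos n with rfl | hn
  · interval_cases m; interval_cases k; simp [G0]
  · have hn' : (0:ℝ) < n := by exact_mod_cast hn
    have h1 : (0:ℝ) < (n:ℝ) + 1 := by positivity
    have hG0 := G0_nonneg hkm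
    have hG1 := G0_le hkm
    have hmn' : (m:ℝ) ≤ n := by exact_mod_cast hmn
    have heq : G0 m k / n - G0 m k / (n+1) = G0 m k / ((n:ℝ) * (n+1)) := by
      field_simp; ring
    rw [heq, abs_of_nonneg (by positivity), div_le_div_iff₀ (by positivity) h1]
    nlinarith

lemma step2 {m k m' k' : ℕ} (hkm : k ≤ m)
    (hc : (m' = m ∧ k' = k) ∨ (m' = m + 1 ∧ (k' = k ∨ k' = k + 1))) :
    |G0 m k - G0 m' k'| ≤ 2 := by
  rcases hc with ⟨rfl, rfl⟩ | ⟨rfl, rfl | rfl⟩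
  · simp
  · rcases Nat.eq_zero_or_pos m with rfl | hm
    · interval_cases k' <;> simp [G0]
    · have hb : (0:ℝ) < m := by exact_mod_cast hm
      have hk : (k':ℝ) ≤ m := by exact_mod_cast hkm
      have hk0 : (0:ℝ) ≤ k' := by positivity
      have heq : G0 (m+1) k' - G0 m k' = 2 * (k':ℝ)^2 / ((m:ℝ) * (m+1)) := by
        unfold G0; push_cast; field_simp; ring
      rw [abs_sub_comm, heq, abs_of_nonneg (by positivity),
        div_le_iff₀ (by positivity)]
      nlinarith
  · rcases Nat.eq_zero_or_pos m with rfl | hm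
    · interval_cases k; simp [G0]
    · have hb : (0:ℝ) < m := by exact_mod_cast hm
      have hk : (k:ℝ) ≤ m := by exact_mod_cast hkm
      have hk0 : (0:ℝ) ≤ k := by positivity
      have heq : G0 (m+1) (k+1) - G0 m k = 2 * ((m:ℝ) - k)^2 / ((m:ℝ) * (m+1)) := by
        unfold G0; push_cast; field_simp; ring
      rw [abs_sub_comm, heq, abs_of_nonneg (by positivity),
        div_le_iff₀ (by positivity)]
      nlinarith

lemma F_bound (n m k m' k' : ℕ) (hkm : k ≤ m) (hmn : m ≤ n)
    (hc : (m' = m ∧ k' = k) ∨ (m' = m + 1 ∧ (k' = k ∨ k' = k + 1))) :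
    |F n m k - F (n + 1) m' k'| ≤ 4 / ((n:ℝ) + 1) := by
  have h1 : (0:ℝ) < (n:ℝ) + 1 := by positivity
  have key : |F n m k - F (n+1) m' k'| ≤
      |G0 m k / n - G0 m k / (n+1)| + |G0 m k - G0 m' k'| / (n+1) := by
    rw [F_eq, F_eq]
    push_cast
    calc |G0 m k / n - G0 m' k' / (n+1)|
        ≤ |G0 m k / n - G0 m k / (n+1)| + |G0 m k / (n+1) - G0 m' k' / (n+1)| :=
          abs_sub_le _ _ _
      _ = |G0 m k / n - G0 m k / (n+1)| + |G0 m k - G0 m' k'| / (n+1) := by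
          rw [div_sub_div_same, abs_div, abs_of_pos h1]
  have h2 := step1 hkm hmn
  have h3 := step2 hkm hc
  have h4 : |G0 m k - G0 m' k'| / ((n:ℝ)+1) ≤ 2 / ((n:ℝ)+1) := by gcongr
  calc |F n m k - F (n + 1) m' k'|
      ≤ |G0 m k / n - G0 m k / (n+1)| + |G0 m k - G0 m' k'| / (n+1) := key
    _ ≤ 1/((n:ℝ)+1) + 2/((n:ℝ)+1) := add_le_add h2 h4
    _ = 3/((n:ℝ)+1) := by rw [← add_div]; norm_num
    _ ≤ 4/((n:ℝ)+1) := by gcongr <;> norm_num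

open Classical in
lemma gini_eq {α : Type*} (S : Multiset (α × Bool)) :
    gini S = F S.card S.card (S.filter fun e => e.2 = true).card := by
  by_cases hS : S = 0
  · subst hS; simp [gini, F]
  · have hn : (0:ℝ) < S.card := by
      have := Multiset.card_pos.mpr hS; exact_mod_cast this
    rw [gini, if_neg hS, F]
    field_simp

open Classical in
lemma term_eq {α : Type*} (S T : Multiset (α × Bool)) :
    ((T.card : ℝ) / S.card) * gini T
      = F S.card T.card (T.filter fun e => e.2 = true).card := by
  by_cases hT : T = 0
  · subst hT; simp [gini, F]
  · have hm : (0:ℝ) < T.card := by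
      have := Multiset.card_pos.mpr hT; exact_mod_cast this
    by_cases hS : S.card = 0
    · simp [F, hS]
    · have hn : (0:ℝ) < S.card := by
        have := Nat.pos_of_ne_zero hS; exact_mod_cast this
      rw [gini, if_neg hT, F]
      field_simp

open Classical in
lemma giniGain_eq {d : ℕ} (S : Multiset ((Fin d → ℝ) × Bool)) (j : Fin d) (t : ℝ) :
    giniGain S j t
      = F S.card S.card (S.filter fun e => e.2 = true).card
        - F S.card (S.filter fun e : (Fin d → ℝ) × Bool => e.1 j ≤ t).card
            ((S.filter fun e : (Fin d → ℝ) × Bool => e.1 j ≤ t).filter fun e => e.2 = true).card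
        - F S.card (S.filter fun e : (Fin d → ℝ) × Bool => t < e.1 j).card
            ((S.filter fun e : (Fin d → ℝ) × Bool => t < e.1 j).filter fun e => e.2 = true).card := by
  by_cases hS : S = 0
  · subst hS; simp [giniGain, F]
  · rw [giniGain, if_neg hS, gini_eq, term_eq, term_eq]

lemma editPath_trans {α : Type*} : ∀ {m n : ℕ} {S T U : Multiset α},
    EditPath m S T → EditPath n T U → EditPath (m + n) S U := by
  intro m
  induction m with
  | zero =>
    intro n S T U h1 h2
    have h1' : S = T := h1
    rw [Nat.zero_add]; rw [h1']; exact h2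
  | succ m ih =>
    intro n S T U h1 h2
    obtain ⟨V, hs, hp⟩ := h1
    rw [Nat.succ_add]
    exact ⟨V, hs, ih hp h2⟩

lemma editPath_del {α : Type*} (S : Multiset α) : EditPath S.card S 0 := by
  induction S using Multiset.induction with
  | empty => rfl
  | cons a s ih =>
    rw [Multiset.card_cons]
    exact ⟨s, Or.inr ⟨a, rfl⟩, ih⟩

lemma editPath_symm {α : Type*} : ∀ {n : ℕ} {S T : Multiset α},
    EditPath n S T → EditPath n T S := by
  intro n
  induction n with
  | zero => intro S T h; exact (h : S = T).symm
  | succ n ih =>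
    intro S T h
    obtain ⟨V, hs, hp⟩ := h
    have h1 : EditPath 1 V S := by
      rcases hs with ⟨a, ha⟩ | ⟨a, ha⟩
      · exact ⟨S, Or.inr ⟨a, ha⟩, rfl⟩
      · exact ⟨S, Or.inl ⟨a, ha⟩, rfl⟩
    exact editPath_trans (ih hp) h1

lemma editPath_exists {α : Type*} (S T : Multiset α) :
    EditPath (S.card + T.card) S T :=
  editPath_trans (editPath_del S) (editPath_symm (editPath_del T))

lemma three_bound {x1 x2 x3 y1 y2 y3 c : ℝ}
    (h1 : |x1 - y1| ≤ c) (h2 : |x2 - y2| ≤ c) (h3 : |x3 - y3| ≤ c) :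
    |x1 - x2 - x3 - (y1 - y2 - y3)| ≤ 3 * c := by
  rw [abs_le] at h1 h2 h3 ⊢
  constructor <;> [linarith [h1.1, h2.2, h3.2]; linarith [h1.2, h2.1, h3.1]]

open Classical in
lemma giniGain_insert {d : ℕ} (S : Multiset ((Fin d → ℝ) × Bool)) (a : (Fin d → ℝ) × Bool)
    (j : Fin d) (t : ℝ) :
    |giniGain S j t - giniGain (a ::ₘ S) j t| ≤ 12 / ((S.card : ℝ) + 1) := by
  have hk : (S.filter fun e => e.2 = true).card ≤ S.card :=
    Multiset.card_le_card (Multiset.filter_le _ _)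
  have hm₁ : (S.filter fun e : (Fin d → ℝ) × Bool => e.1 j ≤ t).card ≤ S.card :=
    Multiset.card_le_card (Multiset.filter_le _ _)
  have hk₁ : ((S.filter fun e : (Fin d → ℝ) × Bool => e.1 j ≤ t).filter fun e => e.2 = true).card
      ≤ (S.filter fun e : (Fin d → ℝ) × Bool => e.1 j ≤ t).card :=
    Multiset.card_le_card (Multiset.filter_le _ _)
  have hm₂ : (S.filter fun e : (Fin d → ℝ) × Bool => t < e.1 j).card ≤ S.card :=
    Multiset.card_le_card (Multiset.filter_le _ _)
  have hk₂ : ((S.filter fun e : (Fin d → ℝ) × Bool => t < e.1 j).filter fun e => e.2 = true).card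
      ≤ (S.filter fun e : (Fin d → ℝ) × Bool => t < e.1 j).card :=
    Multiset.card_le_card (Multiset.filter_le _ _)
  rw [giniGain_eq, giniGain_eq]
  by_cases hp : a.1 j ≤ t
  · have hp' : ¬ t < a.1 j := not_lt.mpr hp
    by_cases hb : a.2 = true
    · simp only [Multiset.filter_cons, hp, hb, hp', if_true, if_false, ite_true, ite_false,
        Multiset.card_cons, Multiset.singleton_add, zero_add, Multiset.card_add,
        Multiset.card_singleton, eq_self_iff_true, not_true, not_false_iff, Bool.false_eq_true, Multiset.card_zero]
      refine le_of_le_of_eq (three_bound (c := 4 / ((S.card : ℝ) + 1))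
        (F_bound _ _ _ _ _ hk le_rfl (Or.inr ⟨rfl, Or.inr rfl⟩))
        (F_bound _ _ _ _ _ hk₁ hm₁ (Or.inr ⟨rfl, Or.inr rfl⟩))
        (F_bound _ _ _ _ _ hk₂ hm₂ (Or.inl ⟨rfl, rfl⟩))) (by ring)
    · simp only [Multiset.filter_cons, hp, hb, hp', if_true, if_false, ite_true, ite_false,
        Multiset.card_cons, Multiset.singleton_add, zero_add, Multiset.card_add,
        Multiset.card_singleton, eq_self_iff_true, not_true, not_false_iff, Bool.false_eq_true, Multiset.card_zero]
      refine le_of_le_of_eq (three_bound (c := 4 / ((S.card : ℝ) + 1))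
        (F_bound _ _ _ _ _ hk le_rfl (Or.inr ⟨rfl, Or.inl rfl⟩))
        (F_bound _ _ _ _ _ hk₁ hm₁ (Or.inr ⟨rfl, Or.inl rfl⟩))
        (F_bound _ _ _ _ _ hk₂ hm₂ (Or.inl ⟨rfl, rfl⟩))) (by ring)
  · have hp2 : t < a.1 j := not_le.mp hp
    by_cases hb : a.2 = true
    · simp only [Multiset.filter_cons, hp, hb, hp2, if_true, if_false, ite_true, ite_false,
        Multiset.card_cons, Multiset.singleton_add, zero_add, Multiset.card_add,
        Multiset.card_singleton, eq_self_iff_true, not_true, not_false_iff, Bool.false_eq_true, Multiset.card_zero]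
      refine le_of_le_of_eq (three_bound (c := 4 / ((S.card : ℝ) + 1))
        (F_bound _ _ _ _ _ hk le_rfl (Or.inr ⟨rfl, Or.inr rfl⟩))
        (F_bound _ _ _ _ _ hk₁ hm₁ (Or.inl ⟨rfl, rfl⟩))
        (F_bound _ _ _ _ _ hk₂ hm₂ (Or.inr ⟨rfl, Or.inr rfl⟩))) (by ring)
    · simp only [Multiset.filter_cons, hp, hb, hp2, if_true, if_false, ite_true, ite_false,
        Multiset.card_cons, Multiset.singleton_add, zero_add, Multiset.card_add,
        Multiset.card_singleton, eq_self_iff_true, not_true, not_false_iff, Bool.false_eq_true, Multiset.card_zero]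
      refine le_of_le_of_eq (three_bound (c := 4 / ((S.card : ℝ) + 1))
        (F_bound _ _ _ _ _ hk le_rfl (Or.inr ⟨rfl, Or.inl rfl⟩))
        (F_bound _ _ _ _ _ hk₁ hm₁ (Or.inl ⟨rfl, rfl⟩))
        (F_bound _ _ _ _ _ hk₂ hm₂ (Or.inr ⟨rfl, Or.inl rfl⟩))) (by ring)

lemma giniGain_insert_max {d : ℕ} (S : Multiset ((Fin d → ℝ) × Bool))
    (a : (Fin d → ℝ) × Bool) (j : Fin d) (t : ℝ) :
    |giniGain S j t - giniGain (a ::ₘ S) j t| ≤ 12 / (max S.card (a ::ₘ S).card : ℝ) := by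
  rw [Multiset.card_cons,
    max_eq_right (by push_cast; linarith : ((S.card:ℕ) : ℝ) ≤ ((S.card + 1 : ℕ) : ℝ))]
  push_cast
  exact giniGain_insert S a j t

lemma giniGain_insert_max' {d : ℕ} (S : Multiset ((Fin d → ℝ) × Bool))
    (a : (Fin d → ℝ) × Bool) (j : Fin d) (t : ℝ) :
    |giniGain (a ::ₘ S) j t - giniGain S j t| ≤ 12 / (max (a ::ₘ S).card S.card : ℝ) := by
  rw [abs_sub_comm, Multiset.card_cons,
    max_eq_left (by push_cast; linarith : ((S.card:ℕ) : ℝ) ≤ ((S.card + 1 : ℕ) : ℝ))]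
  push_cast
  exact giniGain_insert S a j t


/-- if Δ(S,S') ≤ 1 then |G(S,j,t) − G(S',j,t)| ≤ 12 / max(|S|,|S'|). -/
theorem giniGain_smooth_one_edit {d : ℕ} (S S' : Multiset ((Fin d → ℝ) × Bool))
    (h : editDist S S' ≤ 1) (j : Fin d) (t : ℝ) :
    |giniGain S j t - giniGain S' j t| ≤ 12 / (max S.card S'.card : ℝ) := by
  have hex : EditPath (S.card + S'.card) S S' := editPath_exists S S'
  have hne : {n | EditPath n S S'}.Nonempty := ⟨_, hex⟩
  have hmem : EditPath (editDist S S') S S' := Nat.sInf_mem hne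
  rcases Nat.le_one_iff_eq_zero_or_eq_one.mp h with h0 | h1
  · rw [h0] at hmem
    have hSS : S = S' := hmem
    rw [hSS, sub_self, abs_zero]
    positivity
  · rw [h1] at hmem
    obtain ⟨T, hs, hp⟩ := hmem
    have hT : T = S' := hp
    subst hT
    rcases hs with ⟨a, ha⟩ | ⟨a, ha⟩
    · rw [ha]
      exact giniGain_insert_max _ a j t
    · rw [ha]
      exact giniGain_insert_max' _ a j t
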